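/- For every point z of the complex upper half-plane, Θ_K(z) = (−1/(3·z))·(√3/i)·Θ_K(−1/(3·z)); equivalently, Θ_K(−1/(3·z)) = −i·√3·z·Θ_K(z). -/

import Mathlib

open Complex

/-- `Θ_K(z) = ∑_{(a,b)∈ℤ²} e^{2πi(a²+b²−ab)z}`. -/
noncomputable def ThetaK (z : ℂ) : ℂ :=
  ∑' p : ℤ × ℤ,
    Complex.exp (2 * Real.pi * Complex.I * ((p.1 ^ 2 + p.2 ^ 2 - p.1 * p.2 : ℤ) : ℂ) * z)


open Real

lemma my_cpow_half_mul_self {c : ℂ} (hc : c ≠ 0) :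
    c ^ (1/2 : ℂ) * c ^ (1/2 : ℂ) = c := by
  rw [← Complex.cpow_add _ _ hc]
  norm_num

lemma my_re_cpow_half_pos {c : ℂ} (hc : 0 < c.re) : 0 < (c ^ (1/2 : ℂ)).re := by
  have hc0 : c ≠ 0 := fun h => by simp [h] at hc
  rw [Complex.cpow_def_of_ne_zero hc0, Complex.exp_re]
  apply mul_pos (Real.exp_pos _)
  apply Real.cos_pos_of_mem_Ioo
  have harg : |c.arg| < π/2 := Complex.abs_arg_lt_pi_div_two_iff.mpr (Or.inl hc)
  have him : (Complex.log c * (1/2)).im = c.arg / 2 := by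
    simp [Complex.mul_im, Complex.log_im]
    ring
  rw [him]
  rw [abs_lt] at harg
  constructor <;> [linarith; linarith]

lemma my_im_cpow_half_nonneg {c : ℂ} (hc : c ≠ 0) (h : 0 ≤ c.im) :
    0 ≤ (c ^ (1/2 : ℂ)).im := by
  rw [Complex.cpow_def_of_ne_zero hc, Complex.exp_im]
  have him : (Complex.log c * (1/2)).im = c.arg / 2 := by
    simp [Complex.mul_im, Complex.log_im]; ring
  rw [him]
  apply mul_nonneg (Real.exp_pos _).le
  apply Real.sin_nonneg_of_nonneg_of_le_pi
  · linarith [Complex.arg_nonneg_iff.mpr h]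
  · linarith [Complex.arg_le_pi c, Real.pi_pos]

lemma my_im_cpow_half_nonpos {c : ℂ} (hc : 0 < c.re) (h : c.im ≤ 0) :
    (c ^ (1/2 : ℂ)).im ≤ 0 := by
  have hc0 : c ≠ 0 := fun h => by simp [h] at hc
  rw [Complex.cpow_def_of_ne_zero hc0, Complex.exp_im]
  have him : (Complex.log c * (1/2)).im = c.arg / 2 := by
    simp [Complex.mul_im, Complex.log_im]; ring
  rw [him]
  apply mul_nonpos_of_nonneg_of_nonpos (Real.exp_pos _).le
  rcases h.lt_or_eq with h' | h'
  · have h1 : c.arg < 0 := Complex.arg_neg_iff.mpr h'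
    have h2 : -π < c.arg := Complex.neg_pi_lt_arg c
    have := Real.sin_nonneg_of_nonneg_of_le_pi (x := -(c.arg/2)) (by linarith) (by linarith [Real.pi_pos])
    rw [Real.sin_neg] at this
    linarith
  · have : c.arg = 0 := Complex.arg_eq_zero_iff.mpr ⟨hc.le, h'⟩
    simp [this]

lemma my_key_const {z : ℂ} (hz : 0 < z.im) :
    (Real.sqrt 3 : ℂ) * z * ((-I * (2 * (-1/(3*z)))) ^ (1/2 : ℂ))
      = I * ((-I * (2 * z)) ^ (1/2 : ℂ)) := by
  have hz0 : z ≠ 0 := fun h => by simp [h] at hz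
  have hnq : 0 < Complex.normSq z := Complex.normSq_pos.mpr hz0
  set c : ℂ := -I * (2 * (-1/(3*z))) with hc_def
  set d : ℂ := -I * (2 * z) with hd_def
  have hcre : c.re = 2 * z.im / (3 * Complex.normSq z) := by
    have : c = 2 * I / (3 * z) := by rw [hc_def]; ring
    have hne : z.re^2 + z.im^2 ≠ 0 := by nlinarith
    rw [this, Complex.div_re]
    simp [Complex.normSq_apply, Complex.mul_re, Complex.mul_im]
    rw [div_eq_div_iff (by nlinarith) (by nlinarith)]
    ring
  have hcim : c.im = 2 * z.re / (3 * Complex.normSq z) := by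
    have : c = 2 * I / (3 * z) := by rw [hc_def]; ring
    have hne : z.re^2 + z.im^2 ≠ 0 := by nlinarith
    rw [this, Complex.div_im]
    simp [Complex.normSq_apply, Complex.mul_re, Complex.mul_im]
    rw [div_eq_div_iff (by nlinarith) (by nlinarith)]
    ring
  have hdre : d.re = 2 * z.im := by simp [hd_def]
  have hcre' : 0 < c.re := by rw [hcre]; positivity
  have hdre' : 0 < d.re := by rw [hdre]; positivity
  have hc0 : c ≠ 0 := fun h => by simp [h] at hcre'
  have hd0 : d ≠ 0 := fun h => by simp [h] at hdre'
  set u : ℂ := c ^ (1/2 : ℂ)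
  set v : ℂ := d ^ (1/2 : ℂ)
  have hu : 0 < u.re := my_re_cpow_half_pos hcre'
  have hv : 0 < v.re := my_re_cpow_half_pos hdre'
  have hsq : ((Real.sqrt 3 : ℂ) * z * u) ^ 2 = (I * v) ^ 2 := by
    have h3 : (Real.sqrt 3 : ℂ) * (Real.sqrt 3 : ℂ) = 3 := by
      rw [← Complex.ofReal_mul, Real.mul_self_sqrt (by norm_num)]
      norm_num
    have huu : u * u = c := my_cpow_half_mul_self hc0
    have hvv : v * v = d := my_cpow_half_mul_self hd0
    have h1 : ((Real.sqrt 3 : ℂ) * z * u) ^ 2 = 3 * z ^ 2 * c := by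
      rw [pow_two]
      calc (Real.sqrt 3 : ℂ) * z * u * ((Real.sqrt 3 : ℂ) * z * u)
          = ((Real.sqrt 3 : ℂ) * (Real.sqrt 3 : ℂ)) * (z * z) * (u * u) := by ring
        _ = 3 * z ^ 2 * c := by rw [h3, huu]; ring
    have h2 : (I * v) ^ 2 = -d := by
      rw [pow_two]
      calc I * v * (I * v) = (I * I) * (v * v) := by ring
        _ = -d := by rw [Complex.I_mul_I, hvv]; ring
    rw [h1, h2, hc_def, hd_def]
    field_simp
  have hims : 0 < ((Real.sqrt 3 : ℂ) * z * u).im := by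
    have h1 : ((Real.sqrt 3 : ℂ) * z * u).im = Real.sqrt 3 * (z * u).im := by
      rw [mul_assoc, Complex.im_ofReal_mul]
    rw [h1, Complex.mul_im]
    have hs3 : (0:ℝ) < Real.sqrt 3 := Real.sqrt_pos.mpr (by norm_num)
    have key : 0 ≤ z.re * u.im := by
      rcases le_or_gt 0 z.re with h | h
      · exact mul_nonneg h (my_im_cpow_half_nonneg hc0 (by rw [hcim]; positivity))
      · have him_le : u.im ≤ 0 := by
          apply my_im_cpow_half_nonpos hcre'
          rw [hcim]
          apply div_nonpos_of_nonpos_of_nonneg (by linarith) (by positivity)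
        nlinarith
    have : 0 < z.im * u.re := mul_pos hz hu
    nlinarith
  have himt : 0 < (I * v).im := by
    simp [Complex.mul_im]
    exact hv
  have hfac : ((Real.sqrt 3 : ℂ) * z * u - I * v) * ((Real.sqrt 3 : ℂ) * z * u + I * v) = 0 := by
    linear_combination hsq
  rcases mul_eq_zero.mp hfac with h | h
  · exact sub_eq_zero.mp h
  · exfalso
    have him := congrArg Complex.im h
    simp only [Complex.add_im, Complex.zero_im] at him
    linarith

lemma my_norm_cexp_mul_I (r : ℝ) (w : ℂ) : ‖cexp (↑r * w * I)‖ = Real.exp (-(r * w.im)) := by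
  rw [Complex.norm_exp, Complex.mul_I_re, Complex.im_ofReal_mul]

lemma my_summable_exp_neg_sq {c : ℝ} (hc : 0 < c) :
    Summable fun n : ℤ => Real.exp (-(c * (n : ℝ) ^ 2)) := by
  have h := summable_pow_mul_jacobiTheta₂_term_bound 0 (T := c / π) (by positivity) 0
  refine h.congr fun n => ?_
  rw [pow_zero, one_mul]
  congr 1
  have hπ : (π : ℝ) ≠ 0 := Real.pi_ne_zero
  field_simp
  ring

lemma my_im_neg_one_div {w : ℂ} (h : 0 < w.im) : 0 < (-1 / w).im := by
  have hw0 : w ≠ 0 := fun hh => by simp [hh] at h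
  rw [neg_div, Complex.neg_im, one_div, Complex.inv_im, neg_div, neg_neg]
  exact div_pos h (Complex.normSq_pos.mpr hw0)

lemma my_summable_thetaK {z : ℂ} (hz : 0 < z.im) :
    Summable fun p : ℤ × ℤ =>
      Complex.exp (2 * ↑π * I * ((p.1 ^ 2 + p.2 ^ 2 - p.1 * p.2 : ℤ) : ℂ) * z) := by
  have hs : Summable fun n : ℤ => Real.exp (-(π * z.im * (n : ℝ) ^ 2)) :=
    my_summable_exp_neg_sq (by positivity)
  have hb : Summable fun p : ℤ × ℤ =>
      Real.exp (-(π * z.im * (p.1 : ℝ) ^ 2)) * Real.exp (-(π * z.im * (p.2 : ℝ) ^ 2)) :=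
    hs.mul_of_nonneg hs (fun _ => (Real.exp_pos _).le) (fun _ => (Real.exp_pos _).le)
  refine Summable.of_norm_bounded hb fun p => ?_
  have heq : 2 * ↑π * I * ((p.1 ^ 2 + p.2 ^ 2 - p.1 * p.2 : ℤ) : ℂ) * z
      = ((2 * π * ((p.1 : ℝ) ^ 2 + (p.2 : ℝ) ^ 2 - (p.1 : ℝ) * (p.2 : ℝ)) : ℝ) : ℂ) * z * I := by
    push_cast
    ring
  rw [heq, my_norm_cexp_mul_I, ← Real.exp_add, Real.exp_le_exp]
  have := mul_pos Real.pi_pos hz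
  nlinarith [sq_nonneg ((p.1 : ℝ) - p.2)]

/-- The symmetric middle form. -/
noncomputable def myG (z : ℂ) (p : ℤ × ℤ) : ℂ :=
  cexp (3/2 * ↑π * I * z * p.1 ^ 2) * cexp (↑π * I * p.1 * p.2) *
    cexp (-↑π * I * p.2 ^ 2 / (2 * z))

lemma my_summable_G {z : ℂ} (hz : 0 < z.im) : Summable (myG z) := by
  have hz0 : z ≠ 0 := fun h => by simp [h] at hz
  have h2z : 0 < (2 * z).im := by simp [Complex.mul_im]; linarith
  have hy2 : 0 < (-1 / (2 * z)).im := my_im_neg_one_div h2z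
  have hs1 : Summable fun n : ℤ => Real.exp (-(3/2 * π * z.im * (n : ℝ) ^ 2)) :=
    my_summable_exp_neg_sq (by positivity)
  have hs2 : Summable fun n : ℤ => Real.exp (-(π * (-1 / (2 * z)).im * (n : ℝ) ^ 2)) :=
    my_summable_exp_neg_sq (by positivity)
  have hb := hs1.mul_of_nonneg hs2 (fun _ => (Real.exp_pos _).le) (fun _ => (Real.exp_pos _).le)
  refine Summable.of_norm_bounded hb fun p => ?_
  unfold myG
  rw [norm_mul, norm_mul]
  have h1 : (3/2 : ℂ) * ↑π * I * z * (p.1:ℂ) ^ 2 = ((3/2 * π * (p.1:ℝ)^2 : ℝ) : ℂ) * z * I := by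
    push_cast; ring
  have h2 : (↑π : ℂ) * I * (p.1:ℂ) * (p.2:ℂ) = ((π * (p.1:ℝ) * (p.2:ℝ) : ℝ) : ℂ) * I := by
    push_cast; ring
  have h3 : -↑π * I * (p.2:ℂ) ^ 2 / (2 * z) = ((π * (p.2:ℝ)^2 : ℝ) : ℂ) * (-1 / (2*z)) * I := by
    push_cast; field_simp
  rw [h1, h2, h3, my_norm_cexp_mul_I, my_norm_cexp_mul_I]
  have h2' : ‖cexp (((π * (p.1:ℝ) * (p.2:ℝ) : ℝ) : ℂ) * I)‖ = 1 := by
    rw [Complex.norm_exp]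
    simp
  rw [h2', mul_one]
  apply le_of_eq
  rw [show -(3/2*π*(p.1:ℝ)^2*z.im) = -(3/2*π*z.im*(p.1:ℝ)^2) by ring,
    show -(π*(p.2:ℝ)^2*(-1/(2*z)).im) = -(π*(-1/(2*z)).im*(p.2:ℝ)^2) by ring]

lemma my_thetaK_eq {z : ℂ} (hz : 0 < z.im) :
    ThetaK z = 1 / ((-I * (2 * z)) ^ (1/2 : ℂ)) * ∑' p : ℤ × ℤ, myG z p := by
  have hz0 : z ≠ 0 := fun h => by simp [h] at hz
  have h2z : 0 < (2 * z).im := by simp [Complex.mul_im]; linarith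
  have hmz : 0 < (-1 / (2 * z)).im := my_im_neg_one_div h2z
  rw [ThetaK, Summable.tsum_prod (my_summable_thetaK hz)]
  have step1 : ∀ a : ℤ, (∑' b : ℤ,
      Complex.exp (2 * ↑π * I * (((a : ℤ) ^ 2 + b ^ 2 - a * b : ℤ) : ℂ) * z))
      = cexp (2 * ↑π * I * z * (a:ℂ)^2) * jacobiTheta₂ (-z * a) (2 * z) := by
    intro a
    rw [jacobiTheta₂, ← tsum_mul_left]
    refine tsum_congr fun b => ?_
    rw [jacobiTheta₂_term, ← Complex.exp_add]
    congr 1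
    push_cast
    ring
  simp_rw [step1]
  have step2 : ∀ a : ℤ, cexp (2 * ↑π * I * z * (a:ℂ)^2) * jacobiTheta₂ (-z * a) (2 * z)
      = 1 / ((-I * (2 * z)) ^ (1/2 : ℂ)) *
        (cexp (3/2 * ↑π * I * z * (a:ℂ)^2) * jacobiTheta₂ ((a:ℂ)/2) (-1 / (2 * z))) := by
    intro a
    rw [jacobiTheta₂_functional_equation (-z * a) (2 * z)]
    have hdiv : (-z * a) / (2 * z) = -((a:ℂ)/2) := by field_simp
    rw [hdiv, jacobiTheta₂_neg_left]
    have hexp : cexp (2 * ↑π * I * z * (a:ℂ)^2) * cexp (-↑π * I * (-z * a)^2 / (2*z))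
        = cexp (3/2 * ↑π * I * z * (a:ℂ)^2) := by
      rw [← Complex.exp_add]
      congr 1
      field_simp
      ring
    calc cexp (2 * ↑π * I * z * (a:ℂ)^2) *
          (1 / (-I * (2*z)) ^ (1/2:ℂ) * cexp (-↑π * I * (-z * a)^2 / (2*z)) *
            jacobiTheta₂ ((a:ℂ)/2) (-1 / (2*z)))
        = 1 / (-I * (2*z)) ^ (1/2:ℂ) *
          ((cexp (2 * ↑π * I * z * (a:ℂ)^2) * cexp (-↑π * I * (-z * a)^2 / (2*z))) *
            jacobiTheta₂ ((a:ℂ)/2) (-1 / (2*z))) := by ring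
      _ = _ := by rw [hexp]
  simp_rw [step2]
  rw [tsum_mul_left]
  congr 1
  rw [Summable.tsum_prod (my_summable_G hz)]
  refine tsum_congr fun a => ?_
  rw [jacobiTheta₂, ← tsum_mul_left]
  refine tsum_congr fun n => ?_
  unfold myG
  rw [jacobiTheta₂_term, mul_assoc, ← Complex.exp_add, ← Complex.exp_add, ← Complex.exp_add]
  congr 1
  field_simp
  ring

lemma my_G_symm {z : ℂ} (hz : 0 < z.im) :
    ∑' p : ℤ × ℤ, myG (-1/(3*z)) p = ∑' p : ℤ × ℤ, myG z p := by
  have hz0 : z ≠ 0 := fun h => by simp [h] at hz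
  rw [← (Equiv.prodComm ℤ ℤ).tsum_eq (myG z)]
  refine tsum_congr fun p => ?_
  unfold myG
  simp only [Equiv.prodComm_apply, Prod.fst_swap, Prod.snd_swap]
  rw [← Complex.exp_add, ← Complex.exp_add, ← Complex.exp_add, ← Complex.exp_add]
  congr 1
  field_simp
  ring

/-- Inverse transformation: `Θ_K(z) = (−1/(3·z))·(√3/i)·Θ_K(−1/(3·z))`. -/
theorem stmt4 (z : ℂ) (hz : 0 < z.im) :
    ThetaK z
      = (-1 / (3 * z)) * ((Real.sqrt 3 : ℂ) / Complex.I) * ThetaK (-1 / (3 * z)) := by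
  have hz0 : z ≠ 0 := fun h => by simp [h] at hz
  have h3z : 0 < (3 * z).im := by simp [Complex.mul_im]; linarith
  have hw : 0 < (-1 / (3 * z)).im := my_im_neg_one_div h3z
  have h1 := my_thetaK_eq hz
  have h2 := my_thetaK_eq hw
  rw [my_G_symm hz] at h2
  have hkey := my_key_const hz
  set u : ℂ := (-I * (2 * (-1/(3*z)))) ^ (1/2 : ℂ) with hu_def
  set v : ℂ := (-I * (2 * z)) ^ (1/2 : ℂ) with hv_def
  have hbu : (-I * (2 * (-1/(3*z)))) ≠ 0 := by
    have he : (-I * (2 * (-1/(3*z)))) = 2 * I / (3 * z) := by ring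
    rw [he]
    apply div_ne_zero
    · simp [Complex.I_ne_zero]
    · simp [hz0]
  have hbv : (-I * (2 * z)) ≠ 0 := by
    simp [Complex.I_ne_zero, hz0]
  have hu0 : u ≠ 0 := by
    rw [hu_def, Ne, Complex.cpow_eq_zero_iff]
    tauto
  have hv0 : v ≠ 0 := by
    rw [hv_def, Ne, Complex.cpow_eq_zero_iff]
    tauto
  have hI : (I : ℂ) ≠ 0 := Complex.I_ne_zero
  have hs3 : (Real.sqrt 3 : ℂ) ≠ 0 := by
    simp [Real.sqrt_eq_zero']
  have h3 : (Real.sqrt 3 : ℂ) * (Real.sqrt 3 : ℂ) = 3 := by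
    rw [← Complex.ofReal_mul, Real.mul_self_sqrt (by norm_num)]
    norm_num
  have hfac : 1 / v = -1 / (3 * z) * ((Real.sqrt 3 : ℂ) / I) * (1 / u) := by
    have e : 3 * z * I * u = -(Real.sqrt 3 : ℂ) * v := by
      linear_combination (I * (Real.sqrt 3 : ℂ)) * hkey - I * z * u * h3 + (Real.sqrt 3 : ℂ) * v * Complex.I_sq
    rw [div_mul_div_comm, div_mul_div_comm, div_eq_div_iff hv0 (by simp [hz0, hI, hu0])]
    linear_combination e
  rw [h1, h2, hfac]
  ring
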